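/- Let P be a transitive p-subgroup of Sym(A) with |A| > 1. Then there exists a P-block system consisting of exactly p blocks, and the subgroup P' of P stabilizing all these blocks setwise has index p in P. -/

import Mathlib

lemma card_eq_prime_of_pGroup_all_sub {G : Type*} [Group G] [Finite G] {p : ℕ} (hp : p.Prime)
    (hG : IsPGroup p G) (hnt : Nontrivial G)
    (hsub : ∀ H : Subgroup G, H = ⊥ ∨ H = ⊤) : Nat.card G = p := by
  obtain ⟨g, hg⟩ := exists_ne (1 : G)
  have hzp : Subgroup.zpowers g = ⊤ := by
    rcases hsub (Subgroup.zpowers g) with h | h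
    · exact absurd (Subgroup.zpowers_eq_bot.mp h) hg
    · exact h
  have hcard : Nat.card G = orderOf g := by
    rw [← Nat.card_zpowers, hzp, Subgroup.card_top]
  have hpdvd : p ∣ orderOf g := by
    obtain ⟨k, hk⟩ := hG g
    have hdvd : orderOf g ∣ p ^ k := orderOf_dvd_of_pow_eq_one hk
    obtain ⟨j, hj, hjeq⟩ := (Nat.dvd_prime_pow hp).mp hdvd
    have : j ≠ 0 := by
      rintro rfl
      simp only [pow_zero, orderOf_eq_one_iff] at hjeq
      exact hg hjeq
    exact hjeq ▸ dvd_pow_self p this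
  rcases hsub (Subgroup.zpowers (g ^ p)) with h | h
  · have hgp : g ^ p = 1 := Subgroup.zpowers_eq_bot.mp h
    rcases (Nat.Prime.eq_one_or_self_of_dvd hp (orderOf g)
        (orderOf_dvd_of_pow_eq_one hgp)) with h1 | h2
    · exact absurd (orderOf_eq_one_iff.mp h1) hg
    · rw [hcard, h2]
  · exfalso
    have h1 : orderOf (g ^ p) = orderOf g / p := by
      rw [orderOf_pow, Nat.gcd_eq_right hpdvd]
    have h2 : Nat.card G = orderOf (g ^ p) := by
      rw [← Nat.card_zpowers, h, Subgroup.card_top]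
    have hop : 0 < orderOf g := orderOf_pos g
    rw [hcard, h1] at h2
    have := Nat.div_lt_self hop hp.one_lt
    omega

theorem transitive_pGroup_block_system {A : Type*} [Fintype A] (p : ℕ) (hp : p.Prime)
    (P : Subgroup (Equiv.Perm A)) (hP : IsPGroup p P)
    (htrans : ∀ x y : A, ∃ σ ∈ P, σ x = y) (hA : 1 < Fintype.card A) :
    ∃ B : Set A, B.Nonempty ∧
      (∀ σ ∈ P, σ '' B = B ∨ σ '' B ∩ B = ∅) ∧
      {C : Set A | ∃ σ ∈ P, C = σ '' B}.ncard = p ∧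
      Nat.card P =
        p * Nat.card {σ : P // ∀ C : Set A,
          (∃ τ ∈ P, C = τ '' B) → (σ : Equiv.Perm A) '' C = C} := by
  classical
  haveI : Fact p.Prime := ⟨hp⟩
  have hApos : Nonempty A := Fintype.card_pos_iff.mp (by omega)
  obtain ⟨a⟩ := hApos
  -- the stabilizer of a
  set Q : Subgroup ↥P := MulAction.stabilizer ↥P a with hQdef
  have hQmem : ∀ g : ↥P, (g : Equiv.Perm A) a = a → g ∈ Q := by
    intro g hg
    rw [hQdef, MulAction.mem_stabilizer_iff]
    exact hg
  obtain ⟨b, hb⟩ := Fintype.exists_ne_of_one_lt_card hA a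
  obtain ⟨σ₀, hσ₀P, hσ₀⟩ := htrans a b
  have hQne : Q ≠ ⊤ := by
    intro h
    have hmem : (⟨σ₀, hσ₀P⟩ : ↥P) ∈ Q := h ▸ Subgroup.mem_top _
    rw [hQdef, MulAction.mem_stabilizer_iff] at hmem
    have : σ₀ a = a := hmem
    exact hb (by rw [← hσ₀, this])
  -- a maximal subgroup M containing Q
  obtain h | ⟨M, hM, hQM⟩ := eq_top_or_exists_le_coatom Q
  · exact absurd h hQne
  haveI : Group.IsNilpotent ↥P := hP.isNilpotent
  haveI hMnormal : M.Normal :=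
    Subgroup.NormalizerCondition.normal_of_coatom M normalizerCondition_of_isNilpotent hM
  -- the quotient has cardinality p
  have hcardQuot : Nat.card (↥P ⧸ M) = p := by
    apply card_eq_prime_of_pGroup_all_sub hp (hP.to_quotient M)
    · obtain ⟨x, hx⟩ := SetLike.exists_of_lt (lt_top_iff_ne_top.mpr hM.1)
      refine ⟨QuotientGroup.mk x, 1, ?_⟩
      rw [Ne, QuotientGroup.eq_one_iff]
      exact hx.2
    · intro H
      have hcom : M ≤ Subgroup.comap (QuotientGroup.mk' M) H := by
        intro x hx
        rw [Subgroup.mem_comap]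
        have : QuotientGroup.mk' M x = 1 := (QuotientGroup.eq_one_iff x).mpr hx
        rw [this]
        exact H.one_mem
      rcases eq_or_lt_of_le hcom with h | h
      · left
        have h2 := congrArg (Subgroup.map (QuotientGroup.mk' M)) h
        rw [Subgroup.map_comap_eq_self_of_surjective (QuotientGroup.mk'_surjective M)] at h2
        rw [← h2, Subgroup.map_eq_bot_iff, QuotientGroup.ker_mk']
      · right
        have h3 := hM.2 _ h
        have h4 := congrArg (Subgroup.map (QuotientGroup.mk' M)) h3
        rw [Subgroup.map_comap_eq_self_of_surjective (QuotientGroup.mk'_surjective M)] at h4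
        rw [h4, Subgroup.map_top_of_surjective _ (QuotientGroup.mk'_surjective M)]
  -- the block
  set B : Set A := {x | ∃ m : ↥P, m ∈ M ∧ (m : Equiv.Perm A) a = x} with hBdef
  have haB : a ∈ B := ⟨1, M.one_mem, by simp⟩
  -- composition of images
  have hcomp : ∀ g k : ↥P, ((g * k : ↥P) : Equiv.Perm A) '' B
      = (g : Equiv.Perm A) '' ((k : Equiv.Perm A) '' B) := by
    intro g k
    have hfun : (((g * k : ↥P) : Equiv.Perm A) : A → A)
        = ((g : Equiv.Perm A) : A → A) ∘ ((k : Equiv.Perm A) : A → A) := by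
      ext x; simp
    rw [hfun, Set.image_comp]
  have honeimg : ((1 : ↥P) : Equiv.Perm A) '' B = B := by simp
  -- intersecting its own translate nontrivially forces membership in M
  have hF3 : ∀ g : ↥P, ((g : Equiv.Perm A) '' B ∩ B).Nonempty → g ∈ M := by
    rintro g ⟨x, ⟨y, ⟨m, hm, hma⟩, hgy⟩, ⟨m', hm', hm'a⟩⟩
    have hkey : ((m'⁻¹ * g * m : ↥P) : Equiv.Perm A) a = a := by
      have h1 : ((m'⁻¹ * g * m : ↥P) : Equiv.Perm A) a
          = (m'⁻¹ : ↥P).val ((g : Equiv.Perm A) ((m : ↥P).val a)) := by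
        simp [Equiv.Perm.mul_apply]
      rw [h1, hma, hgy, ← hm'a]
      have : ((m'⁻¹ : ↥P) : Equiv.Perm A) = ((m' : ↥P) : Equiv.Perm A)⁻¹ := rfl
      simp [this]
    have hQ' : m'⁻¹ * g * m ∈ M := hQM (hQmem _ hkey)
    have : g = m' * (m'⁻¹ * g * m) * m⁻¹ := by group
    rw [this]
    exact M.mul_mem (M.mul_mem hm' hQ') (M.inv_mem hm)
  -- the stabilizer of B in P is exactly M
  have hF2 : ∀ g : ↥P, (g : Equiv.Perm A) '' B = B ↔ g ∈ M := by
    intro g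
    constructor
    · intro h
      apply hF3 g
      refine ⟨(g : Equiv.Perm A) a, ⟨a, haB, rfl⟩, ?_⟩
      rw [← h]; exact ⟨a, haB, rfl⟩
    · intro hg
      ext x
      constructor
      · rintro ⟨y, ⟨m, hm, hma⟩, rfl⟩
        refine ⟨g * m, M.mul_mem hg hm, ?_⟩
        simp [Equiv.Perm.mul_apply, hma]
      · rintro ⟨m, hm, rfl⟩
        refine ⟨((g⁻¹ * m : ↥P) : Equiv.Perm A) a, ⟨g⁻¹ * m, M.mul_mem (M.inv_mem hg) hm, rfl⟩, ?_⟩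
        have := hcomp g (g⁻¹ * m)
        have h2 : g * (g⁻¹ * m) = m := by group
        rw [h2] at this
        have := congrArg (fun s => a ∈ s) this
        -- easier: pointwise
        show (g : Equiv.Perm A) (((g⁻¹ * m : ↥P) : Equiv.Perm A) a) = (m : Equiv.Perm A) a
        have h3 : (g : Equiv.Perm A) (((g⁻¹ * m : ↥P) : Equiv.Perm A) a)
            = ((g * (g⁻¹ * m) : ↥P) : Equiv.Perm A) a := by
          simp [Equiv.Perm.mul_apply]
        rw [h3, h2]
  -- cosets give equal translates
  have hcoset : ∀ g h : ↥P, g⁻¹ * h ∈ M →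
      (g : Equiv.Perm A) '' B = (h : Equiv.Perm A) '' B := by
    intro g h hgh
    have h1 : (h : Equiv.Perm A) '' B = ((g * (g⁻¹ * h) : ↥P) : Equiv.Perm A) '' B := by
      congr 1
      group
    rw [h1, hcomp, (hF2 _).mpr hgh]
  refine ⟨B, ⟨a, haB⟩, ?_, ?_, ?_⟩
  · -- block condition
    intro σ hσ
    by_cases hc : σ '' B ∩ B = ∅
    · right; exact hc
    · left
      have hne : (σ '' B ∩ B).Nonempty := Set.nonempty_iff_ne_empty.mpr hc
      exact (hF2 ⟨σ, hσ⟩).mpr (hF3 ⟨σ, hσ⟩ hne)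
  · -- number of blocks is p
    set S : Set (Set A) := {C : Set A | ∃ σ ∈ P, C = σ '' B} with hSdef
    have hf : ∀ g : ↥P, (g : Equiv.Perm A) '' B ∈ S := fun g => ⟨g, g.2, rfl⟩
    let F : (↥P ⧸ M) → S := fun q =>
      Quotient.liftOn' q (fun g => (⟨(g : Equiv.Perm A) '' B, hf g⟩ : S))
        (fun g h hr => Subtype.ext (hcoset g h (QuotientGroup.leftRel_apply.mp hr)))
    have hFmk : ∀ g : ↥P, F (QuotientGroup.mk g) = ⟨(g : Equiv.Perm A) '' B, hf g⟩ :=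
      fun g => rfl
    have hFbij : Function.Bijective F := by
      constructor
      · intro q₁ q₂
        induction q₁ using QuotientGroup.induction_on
        induction q₂ using QuotientGroup.induction_on
        rename_i g h
        intro hFeq
        rw [hFmk, hFmk] at hFeq
        have heq : (g : Equiv.Perm A) '' B = (h : Equiv.Perm A) '' B :=
          congrArg Subtype.val hFeq
        have : (g⁻¹ * h : ↥P) ∈ M := by
          rw [← hF2]
          rw [hcomp, ← heq, ← hcomp]
          have h2 : g⁻¹ * g = 1 := by group
          rw [h2, honeimg]
        exact (QuotientGroup.eq ).mpr this
      · rintro ⟨C, σ, hσ, rfl⟩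
        exact ⟨QuotientGroup.mk ⟨σ, hσ⟩, rfl⟩
    have : S.ncard = Nat.card (↥P ⧸ M) := by
      rw [← Nat.card_coe_set_eq]
      exact (Nat.card_congr (Equiv.ofBijective F hFbij)).symm
    rw [hSdef] at this
    rw [this, hcardQuot]
  · -- index computation
    have hiff : ∀ g : ↥P, g ∈ M ↔
        (∀ C : Set A, (∃ τ ∈ P, C = τ '' B) → (g : Equiv.Perm A) '' C = C) := by
      intro g
      constructor
      · rintro hgM C ⟨τ, hτ, rfl⟩
        have h1 : τ '' B = ((⟨τ, hτ⟩ : ↥P) : Equiv.Perm A) '' B := rfl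
        rw [h1, ← hcomp]
        apply hcoset
        have h2 : (g * ⟨τ, hτ⟩)⁻¹ * (⟨τ, hτ⟩ : ↥P) = (⟨τ, hτ⟩ : ↥P)⁻¹ * g⁻¹ * (⟨τ, hτ⟩ : ↥P)⁻¹⁻¹ := by
          group
        rw [h2]
        exact hMnormal.conj_mem g⁻¹ (M.inv_mem hgM) _
      · intro h
        apply (hF2 g).mp
        apply h B
        exact ⟨1, P.one_mem, by simp⟩
    have hcardeq : Nat.card {σ : ↥P // ∀ C : Set A,
        (∃ τ ∈ P, C = τ '' B) → (σ : Equiv.Perm A) '' C = C} = Nat.card M :=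
      Nat.card_congr (Equiv.subtypeEquivRight hiff).symm
    rw [hcardeq, ← hcardQuot]
    exact Subgroup.card_eq_card_quotient_mul_card_subgroup M
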